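/- Fix l > 0, set w(θ) = 1 + l² cos²θ, and let f : ℝ² → ℝ³ be f(t,θ) = ( e^{−t} cos(lt) cos θ, e^{−t} sin θ, e^{−t} sin(lt) cos θ ). Define n : ℝ² → ℝ³ by n(t,θ) = ( −(l cos(lt) cos²θ − sin(lt))/√w, −(l cosθ sinθ)/√w, −(cos(lt) + l sin(lt) cos²θ)/√w ). Then for all (t,θ): |n| = 1, ⟨n, ∂_t f⟩ = 0 and ⟨n, ∂_θ f⟩ = 0; the second fundamental form entries A₁₁ := −⟨∂_t f, ∂_t n⟩, A₁₂ := −⟨∂_t f, ∂_θ n⟩, A₂₁ := −⟨∂_θ f, ∂_t n⟩, A₂₂ := −⟨∂_θ f, ∂_θ n⟩ satisfy A₁₁ = e^{−t} l cosθ √w, A₁₂ = A₂₁ = e^{−t} l sinθ / √w, A₂₂ = e^{−t} l cosθ / √w; and consequently the mean curvature H := A₁₁/g₁₁ + A₂₂/g₂₂ equals 2 e^{t} l cosθ / √w, where g₁₁ = e^{−2t} w and g₂₂ = e^{−2t} are the diagonal entries of the pullback metric of f. -/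

import Mathlib

open Real

noncomputable section

open scoped RealInnerProductSpace

/-- The explicit Willmore surface `f(t,θ)`. -/
def fSurf (l : ℝ) : ℝ × ℝ → EuclideanSpace ℝ (Fin 3) := fun p =>
  (WithLp.equiv 2 (Fin 3 → ℝ)).symm
    ![Real.exp (-p.1) * Real.cos (l * p.1) * Real.cos p.2,
      Real.exp (-p.1) * Real.sin p.2,
      Real.exp (-p.1) * Real.sin (l * p.1) * Real.cos p.2]

/-- `w(θ) = 1 + l² cos² θ`. -/
def wFun (l : ℝ) (θ : ℝ) : ℝ := 1 + l ^ 2 * Real.cos θ ^ 2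

/-- The unit normal of the explicit Willmore surface. -/
def nSurf (l : ℝ) : ℝ × ℝ → EuclideanSpace ℝ (Fin 3) := fun p =>
  (WithLp.equiv 2 (Fin 3 → ℝ)).symm
    ![-((l * Real.cos (l * p.1) * Real.cos p.2 ^ 2 - Real.sin (l * p.1)) /
        Real.sqrt (wFun l p.2)),
      -((l * Real.cos p.2 * Real.sin p.2) / Real.sqrt (wFun l p.2)),
      -((Real.cos (l * p.1) + l * Real.sin (l * p.1) * Real.cos p.2 ^ 2) /
        Real.sqrt (wFun l p.2))]

lemma hasDerivAt_E3 {g1 g2 g3 : ℝ → ℝ} {g1' g2' g3' x : ℝ}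
    (h1 : HasDerivAt g1 g1' x) (h2 : HasDerivAt g2 g2' x) (h3 : HasDerivAt g3 g3' x) :
    HasDerivAt (fun s => ((WithLp.equiv 2 (Fin 3 → ℝ)).symm ![g1 s, g2 s, g3 s] :
        EuclideanSpace ℝ (Fin 3)))
      ((WithLp.equiv 2 (Fin 3 → ℝ)).symm ![g1', g2', g3']) x := by
  have h : HasDerivAt (fun s => (![g1 s, g2 s, g3 s] : Fin 3 → ℝ)) ![g1', g2', g3'] x := by
    rw [hasDerivAt_pi]
    intro i
    fin_cases i <;> simpa
  exact (PiLp.continuousLinearEquiv 2 ℝ (fun _ : Fin 3 => ℝ)).symm.hasFDerivAt.comp_hasDerivAt x h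

lemma inner_E3 (a b c a' b' c' : ℝ) :
    ⟪((WithLp.equiv 2 (Fin 3 → ℝ)).symm ![a,b,c] : EuclideanSpace ℝ (Fin 3)),
     (WithLp.equiv 2 (Fin 3 → ℝ)).symm ![a',b',c']⟫ = a*a' + b*b' + c*c' := by
  simp [PiLp.inner_apply, Fin.sum_univ_three]
  ring

lemma norm_E3 (a b c : ℝ) :
    ‖((WithLp.equiv 2 (Fin 3 → ℝ)).symm ![a,b,c] : EuclideanSpace ℝ (Fin 3))‖
      = Real.sqrt (a^2 + b^2 + c^2) := by
  rw [EuclideanSpace.norm_eq]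
  simp [Fin.sum_univ_three, Real.norm_eq_abs, sq_abs]

/-- The unit normal, the second fundamental form and the mean curvature of the explicit
Willmore surface (Section 6.1). -/
theorem stmt18 (l : ℝ) (hl : 0 < l) :
    ∀ t θ : ℝ,
      let ft := deriv (fun s => fSurf l (s, θ)) t
      let fθ := deriv (fun s => fSurf l (t, s)) θ
      let nt := deriv (fun s => nSurf l (s, θ)) t
      let nθ := deriv (fun s => nSurf l (t, s)) θ
      ‖nSurf l (t, θ)‖ = 1 ∧
      ⟪nSurf l (t, θ), ft⟫ = 0 ∧
      ⟪nSurf l (t, θ), fθ⟫ = 0 ∧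
      -⟪ft, nt⟫ = Real.exp (-t) * l * Real.cos θ * Real.sqrt (wFun l θ) ∧
      -⟪ft, nθ⟫ = Real.exp (-t) * l * Real.sin θ / Real.sqrt (wFun l θ) ∧
      -⟪fθ, nt⟫ = Real.exp (-t) * l * Real.sin θ / Real.sqrt (wFun l θ) ∧
      -⟪fθ, nθ⟫ = Real.exp (-t) * l * Real.cos θ / Real.sqrt (wFun l θ) ∧
      (-⟪ft, nt⟫) / (Real.exp (-(2 * t)) * wFun l θ) + (-⟪fθ, nθ⟫) / Real.exp (-(2 * t))
        = 2 * Real.exp t * l * Real.cos θ / Real.sqrt (wFun l θ) := by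
  intro t θ ft fθ nt nθ
  have hwpos : (0:ℝ) < wFun l θ := by unfold wFun; positivity
  set q := Real.sqrt (wFun l θ) with hqdef
  have hqpos : 0 < q := Real.sqrt_pos.mpr hwpos
  have hq0 : q ≠ 0 := ne_of_gt hqpos
  have hq2 : q ^ 2 = 1 + l ^ 2 * Real.cos θ ^ 2 := by
    rw [hqdef, Real.sq_sqrt hwpos.le]; rfl
  have P1 : Real.sin (l*t)^2 + Real.cos (l*t)^2 = 1 := Real.sin_sq_add_cos_sq _
  have P2 : Real.sin θ^2 + Real.cos θ^2 = 1 := Real.sin_sq_add_cos_sq _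
  -- basic derivatives
  have hE : HasDerivAt (fun s : ℝ => Real.exp (-s)) (Real.exp (-t) * -1) t := by
    simpa using ((hasDerivAt_id t).neg).exp
  have hc : HasDerivAt (fun s : ℝ => Real.cos (l * s)) (-Real.sin (l*t) * l) t := by
    simpa using ((hasDerivAt_id t).const_mul l).cos
  have hs : HasDerivAt (fun s : ℝ => Real.sin (l * s)) (Real.cos (l*t) * l) t := by
    simpa using ((hasDerivAt_id t).const_mul l).sin
  have hC : HasDerivAt Real.cos (-Real.sin θ) θ := Real.hasDerivAt_cos θ
  have hS : HasDerivAt Real.sin (Real.cos θ) θ := Real.hasDerivAt_sin θ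
  have hpow : HasDerivAt (fun x => Real.cos x ^ 2) (2 * Real.cos θ * -Real.sin θ) θ := by
    simpa using hC.fun_pow 2
  have hw : HasDerivAt (fun x => wFun l x) (l^2 * (2 * Real.cos θ * -Real.sin θ)) θ := by
    exact ((hpow.const_mul (l^2)).const_add 1)
  have hq : HasDerivAt (fun x => Real.sqrt (wFun l x))
      ((l^2 * (2 * Real.cos θ * -Real.sin θ)) / (2 * q)) θ :=
    hw.sqrt (ne_of_gt hwpos)
  -- ft
  have hft : ft = (WithLp.equiv 2 (Fin 3 → ℝ)).symm
      ![(Real.exp (-t) * -1 * Real.cos (l*t) + Real.exp (-t) * (-Real.sin (l*t) * l)) * Real.cos θ,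
        Real.exp (-t) * -1 * Real.sin θ,
        (Real.exp (-t) * -1 * Real.sin (l*t) + Real.exp (-t) * (Real.cos (l*t) * l)) * Real.cos θ] :=
    (hasDerivAt_E3 ((hE.mul hc).mul_const (Real.cos θ)) (hE.mul_const (Real.sin θ)) ((hE.mul hs).mul_const (Real.cos θ))).deriv
  -- fθ
  have hfθ : fθ = (WithLp.equiv 2 (Fin 3 → ℝ)).symm
      ![Real.exp (-t) * Real.cos (l*t) * -Real.sin θ,
        Real.exp (-t) * Real.cos θ,
        Real.exp (-t) * Real.sin (l*t) * -Real.sin θ] :=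
    (hasDerivAt_E3 (hC.const_mul (Real.exp (-t) * Real.cos (l*t))) (hS.const_mul (Real.exp (-t))) (hC.const_mul (Real.exp (-t) * Real.sin (l*t)))).deriv
  -- nt
  have hnt : nt = (WithLp.equiv 2 (Fin 3 → ℝ)).symm
      ![(l^2 * Real.sin (l*t) * Real.cos θ ^ 2 + l * Real.cos (l*t)) / q,
        0,
        (l * Real.sin (l*t) - l^2 * Real.cos (l*t) * Real.cos θ ^ 2) / q] := by
    refine (hasDerivAt_E3 ?_ ?_ ?_).deriv
    · have h := ((((hc.const_mul l).mul_const (Real.cos θ ^ 2)).sub hs).div_const q).neg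
      rw [show (l^2 * Real.sin (l*t) * Real.cos θ ^ 2 + l * Real.cos (l*t)) / q
          = -((l * (-Real.sin (l*t) * l) * Real.cos θ ^ 2 - Real.cos (l*t) * l) / q) by ring]
      exact h
    · simpa using (hasDerivAt_const t (-((l * Real.cos θ * Real.sin θ) / q)))
    · have h := ((hc.add ((hs.const_mul l).mul_const (Real.cos θ ^ 2))).div_const q).neg
      rw [show (l * Real.sin (l*t) - l^2 * Real.cos (l*t) * Real.cos θ ^ 2) / q
          = -((-Real.sin (l*t) * l + l * (Real.cos (l*t) * l) * Real.cos θ ^ 2) / q) by ring]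
      exact h
  -- nθ
  have hnθ : nθ = (WithLp.equiv 2 (Fin 3 → ℝ)).symm
      ![l * Real.cos θ * Real.sin θ *
          (2 * Real.cos (l*t) + l^2 * Real.cos (l*t) * Real.cos θ ^ 2 + l * Real.sin (l*t)) / q ^ 3,
        -(l * (Real.cos θ ^ 2 - Real.sin θ ^ 2 + l^2 * Real.cos θ ^ 4)) / q ^ 3,
        l * Real.cos θ * Real.sin θ *
          (2 * Real.sin (l*t) + l^2 * Real.sin (l*t) * Real.cos θ ^ 2 - l * Real.cos (l*t)) / q ^ 3] := by
    refine (hasDerivAt_E3 ?_ ?_ ?_).deriv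
    · have h := (((hpow.const_mul (l * Real.cos (l*t))).sub_const (Real.sin (l*t))).div hq hq0).neg
      rw [show l * Real.cos θ * Real.sin θ *
          (2 * Real.cos (l*t) + l^2 * Real.cos (l*t) * Real.cos θ ^ 2 + l * Real.sin (l*t)) / q ^ 3
          = -((l * Real.cos (l*t) * (2 * Real.cos θ * -Real.sin θ) * q -
          (l * Real.cos (l*t) * Real.cos θ ^ 2 - Real.sin (l*t)) *
            (l ^ 2 * (2 * Real.cos θ * -Real.sin θ) / (2 * q))) / q ^ 2) from by
        field_simp
        linear_combination (-(2 * Real.cos θ * Real.sin θ * Real.cos (l*t))) * hq2]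
      exact h
    · have h := (((hC.const_mul l).mul hS).div hq hq0).neg
      rw [show -(l * (Real.cos θ ^ 2 - Real.sin θ ^ 2 + l^2 * Real.cos θ ^ 4)) / q ^ 3
          = -(((l * -Real.sin θ * Real.sin θ + l * Real.cos θ * Real.cos θ) * q -
          l * Real.cos θ * Real.sin θ * (l ^ 2 * (2 * Real.cos θ * -Real.sin θ) / (2 * q))) / q ^ 2) from by
        field_simp
        linear_combination (Real.cos θ ^ 2 - Real.sin θ ^ 2) * hq2]
      exact h
    · have h := (((hpow.const_mul (l * Real.sin (l*t))).const_add (Real.cos (l*t))).div hq hq0).neg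
      rw [show l * Real.cos θ * Real.sin θ *
          (2 * Real.sin (l*t) + l^2 * Real.sin (l*t) * Real.cos θ ^ 2 - l * Real.cos (l*t)) / q ^ 3
          = -((l * Real.sin (l*t) * (2 * Real.cos θ * -Real.sin θ) * q -
          (Real.cos (l*t) + l * Real.sin (l*t) * Real.cos θ ^ 2) *
            (l ^ 2 * (2 * Real.cos θ * -Real.sin θ) / (2 * q))) / q ^ 2) from by
        field_simp
        linear_combination (-(2 * Real.cos θ * Real.sin θ * Real.sin (l*t))) * hq2]
      exact h
  -- main algebra
  have hA11 : -⟪ft, nt⟫ = Real.exp (-t) * l * Real.cos θ * q := by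
    rw [hft, hnt, inner_E3]
    field_simp
    linear_combination (l * Real.cos θ * (1 + l^2 * Real.cos θ ^ 2)) * Real.sin_sq_add_cos_sq (t*l) - (l * Real.cos θ) * hq2
  have hA12 : -⟪ft, nθ⟫ = Real.exp (-t) * l * Real.sin θ / q := by
    rw [hft, hnθ, inner_E3]
    field_simp
    linear_combination (Real.sin θ * Real.cos θ ^ 2 * (l^2 * (1 + Real.cos θ ^ 2) + 2)) * Real.sin_sq_add_cos_sq (t*l) + Real.sin θ * P2 - Real.sin θ * hq2
  have hA21 : -⟪fθ, nt⟫ = Real.exp (-t) * l * Real.sin θ / q := by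
    rw [hfθ, hnt, inner_E3]
    field_simp
    linear_combination (l * Real.sin θ) * Real.sin_sq_add_cos_sq (t*l)
  have hA22 : -⟪fθ, nθ⟫ = Real.exp (-t) * l * Real.cos θ / q := by
    rw [hfθ, hnθ, inner_E3]
    field_simp
    linear_combination (2 * Real.cos θ * Real.sin θ ^ 2 + Real.cos θ ^ 3 * Real.sin θ ^ 2 * l ^ 2) * Real.sin_sq_add_cos_sq (t*l) + (Real.cos θ * (1 + l^2 * Real.cos θ ^ 2)) * P2 - Real.cos θ * hq2
  refine ⟨?_, ?_, ?_, hA11, hA12, hA21, hA22, ?_⟩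
  · show ‖nSurf l (t, θ)‖ = 1
    unfold nSurf
    rw [norm_E3]
    field_simp
    rw [show wFun l θ = 1 + l^2 * Real.cos θ ^ 2 from rfl]
    rw [Real.sqrt_eq_one, Real.sq_sqrt (by positivity), div_eq_one_iff_eq (by positivity)]
    linear_combination (l^2 * Real.cos θ ^ 4 + 1) * P1 + (l^2 * Real.cos θ ^ 2) * P2
  · show ⟪nSurf l (t, θ), ft⟫ = 0
    rw [hft]; unfold nSurf; rw [inner_E3]
    field_simp
    linear_combination (Real.exp (-t) * Real.cos θ * l * (Real.cos θ ^ 2 - 1)) * P1 + (Real.exp (-t) * Real.cos θ * l) * P2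
  · show ⟪nSurf l (t, θ), fθ⟫ = 0
    rw [hfθ]; unfold nSurf; rw [inner_E3]
    field_simp
    have hu : Real.sqrt (wFun l θ) ^ 2 = wFun l θ := Real.sq_sqrt hwpos.le
    linear_combination (Real.exp (-t) * Real.sin θ * l * Real.cos θ ^ 2) * P1
  · rw [hA11, hA22]
    have hE2 : Real.exp (-(2*t)) = Real.exp (-t) ^ 2 := by
      rw [show -(2*t) = (-t) + (-t) by ring, Real.exp_add]; ring
    have hEE : Real.exp t * Real.exp (-t) = 1 := by
      rw [← Real.exp_add]; simp
    have hEpos : (0:ℝ) < Real.exp (-t) := Real.exp_pos _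
    rw [hE2]
    have hwval : wFun l θ = 1 + l^2 * Real.cos θ ^ 2 := rfl
    rw [hwval]
    field_simp
    linear_combination Real.cos θ * hq2 - (2 * Real.cos θ * (1 + l^2 * Real.cos θ ^ 2)) * hEE

end
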